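/- Let C ⊆ ℝ² be a closed set whose coordinate projections both have Lebesgue measure zero. Then for any absolutely continuous curve γ : [0,1] → ℝ², the set {t ∈ [0,1] : γ(t) ∈ C, γ is differentiable at t, and γ'(t) ≠ 0} has Lebesgue measure zero. -/

import Mathlib

open MeasureTheory Set
open scoped NNReal ENNReal

/-- Absolute continuity of a curve on `[0,1]`: differentiable a.e., derivative integrable,
and the fundamental theorem of calculus holds. -/
def AbsCont {E : Type*} [NormedAddCommGroup E] [NormedSpace ℝ E] (γ : ℝ → E) : Prop :=
  (∀ᵐ t ∂(volume.restrict (Icc (0:ℝ) 1)), DifferentiableAt ℝ γ t) ∧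
  IntegrableOn (deriv γ) (Icc (0:ℝ) 1) volume ∧
  ∀ t ∈ Icc (0:ℝ) 1, γ t - γ 0 = ∫ s in (0:ℝ)..t, deriv γ s

lemma key_piece (f : ℝ → ℝ) (N : Set ℝ) (hN : volume N = 0) (n : ℕ)
    (S : Set ℝ) (hSN : ∀ t ∈ S, f t ∈ N)
    (hS : ∀ t ∈ S, ∀ s ∈ S, |s - t| ≤ (n + 1) * |f s - f t|) :
    volume S = 0 := by
  classical
  set g : ℝ → ℝ := Function.invFunOn f S with hg
  have hginv : ∀ y ∈ f '' S, g y ∈ S ∧ f (g y) = y := by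
    intro y hy
    exact ⟨Function.invFunOn_mem hy, Function.invFunOn_eq hy⟩
  have hLip : LipschitzOnWith (n + 1 : ℝ≥0) g (f '' S) := by
    apply LipschitzOnWith.of_dist_le_mul
    intro y hy y' hy'
    obtain ⟨hyS, hyf⟩ := hginv y hy
    obtain ⟨hy'S, hy'f⟩ := hginv y' hy'
    have := hS (g y') hy'S (g y) hyS
    rw [hyf, hy'f] at this
    simpa [Real.dist_eq] using this
  have hinj : InjOn f S := by
    intro a ha b hb hab
    have h1 := hS a ha b hb
    rw [hab, sub_self, abs_zero, mul_zero] at h1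
    have h2 : b - a = 0 := abs_eq_zero.mp (le_antisymm h1 (abs_nonneg _))
    linarith
  have hsub : S ⊆ g '' (f '' S) := by
    intro t ht
    exact ⟨f t, mem_image_of_mem f ht, hinj.leftInvOn_invFunOn ht⟩
  have h1 : volume (g '' (f '' S)) = μH[1] (g '' (f '' S)) := by
    rw [MeasureTheory.hausdorffMeasure_real]
  have h2 : μH[1] (g '' (f '' S)) ≤ ((n + 1 : ℝ≥0) : ℝ≥0∞) ^ (1 : ℝ) * μH[1] (f '' S) :=
    hLip.hausdorffMeasure_image_le zero_le_one
  have h3 : μH[1] (f '' S) = 0 := by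
    rw [MeasureTheory.hausdorffMeasure_real]
    exact measure_mono_null (image_subset_iff.mpr hSN) hN
  refine le_antisymm ?_ zero_le
  calc volume S ≤ volume (g '' (f '' S)) := measure_mono hsub
    _ ≤ ((n + 1 : ℝ≥0) : ℝ≥0∞) ^ (1 : ℝ) * μH[1] (f '' S) := by rw [h1]; exact h2
    _ = 0 := by rw [h3, mul_zero]

lemma key (f : ℝ → ℝ) (N : Set ℝ) (hN : volume N = 0) :
    volume {t | DifferentiableAt ℝ f t ∧ deriv f t ≠ 0 ∧ f t ∈ N} = 0 := by
  set A : ℕ → ℕ → ℤ → Set ℝ := fun n m k =>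
    {t | f t ∈ N ∧ (∀ s, |s - t| ≤ 1 / (m + 1) → |s - t| ≤ (n + 1) * |f s - f t|) ∧
      t ∈ Icc ((k : ℝ) / (m + 1)) ((k + 1 : ℝ) / (m + 1))} with hA
  have hcover : {t | DifferentiableAt ℝ f t ∧ deriv f t ≠ 0 ∧ f t ∈ N} ⊆
      ⋃ (n : ℕ) (m : ℕ) (k : ℤ), A n m k := by
    rintro t ⟨hd, hne, hmem⟩
    set c := deriv f t with hc
    have hcpos : 0 < |c| := abs_pos.mpr hne
    have hder := hd.hasDerivAt
    rw [hasDerivAt_iff_isLittleO] at hder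
    have hev : ∀ᶠ s in nhds t, ‖f s - f t - (s - t) • c‖ ≤ |c| / 2 * ‖s - t‖ :=
      hder.def (by positivity)
    obtain ⟨δ, hδ, hball⟩ := Metric.eventually_nhds_iff.mp hev
    obtain ⟨n, hn⟩ := exists_nat_ge (2 / |c|)
    obtain ⟨m, hm⟩ := exists_nat_gt (1 / δ)
    refine mem_iUnion.mpr ⟨n, mem_iUnion.mpr ⟨m, mem_iUnion.mpr ⟨⌊t * (m + 1)⌋, ?_⟩⟩⟩
    have hm1 : (0 : ℝ) < m + 1 := by positivity
    refine ⟨hmem, ?_, ?_⟩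
    · intro s hs
      have hsd : dist s t < δ := by
        rw [Real.dist_eq]
        calc |s - t| ≤ 1 / (m + 1) := hs
          _ < δ := by
            rw [div_lt_iff₀ hm1]
            calc (1 : ℝ) = δ * (1 / δ) := by field_simp
              _ < δ * (m + 1) := by
                apply mul_lt_mul_of_pos_left _ hδ
                linarith
      have hb := hball hsd
      simp only [Real.norm_eq_abs, smul_eq_mul] at hb
      have h1 : |c| * |s - t| - |f s - f t| ≤ |f s - f t - (s - t) * c| := by
        have h := abs_sub_abs_le_abs_sub ((s - t) * c) (f s - f t)
        have e1 : |(s - t) * c| = |c| * |s - t| := by rw [abs_mul, mul_comm]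
        have e2 : |(s - t) * c - (f s - f t)| = |f s - f t - (s - t) * c| := abs_sub_comm _ _
        rw [e1, e2] at h
        exact h
      have h2 : (|c| / 2) * |s - t| ≤ |f s - f t| := by nlinarith
      calc |s - t| ≤ (2 / |c|) * |f s - f t| := by
            rw [div_mul_eq_mul_div, le_div_iff₀ hcpos]
            nlinarith
        _ ≤ (n + 1) * |f s - f t| := by
            apply mul_le_mul_of_nonneg_right _ (abs_nonneg _)
            linarith
    · constructor
      · rw [div_le_iff₀ hm1]
        exact Int.floor_le _
      · rw [le_div_iff₀ hm1]
        push_cast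
        exact (Int.lt_floor_add_one _).le
  refine measure_mono_null hcover ?_
  refine measure_iUnion_null fun n => measure_iUnion_null fun m => measure_iUnion_null fun k => ?_
  apply key_piece f N hN n
  · intro t ht; exact ht.1
  · intro t ht s hs
    apply ht.2.1
    have h1 := ht.2.2
    have h2 := hs.2.2
    have hm1 : (0 : ℝ) < m + 1 := by positivity
    have hlen : ((k : ℝ) + 1) / (m + 1) - (k : ℝ) / (m + 1) = 1 / (m + 1) := by
      field_simp
      ring
    rw [abs_sub_le_iff]
    exact ⟨by linarith [h1.1, h1.2, h2.1, h2.2], by linarith [h1.1, h1.2, h2.1, h2.2]⟩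

theorem stmt3 (C : Set (ℝ × ℝ)) (hC : IsClosed C)
    (h1 : volume (Prod.fst '' C) = 0) (h2 : volume (Prod.snd '' C) = 0)
    (γ : ℝ → ℝ × ℝ) (hγ : AbsCont γ) :
    volume {t ∈ Icc (0:ℝ) 1 | γ t ∈ C ∧ DifferentiableAt ℝ γ t ∧ deriv γ t ≠ 0} = 0 := by
  set f1 : ℝ → ℝ := fun t => (γ t).1
  set f2 : ℝ → ℝ := fun t => (γ t).2
  have hsub : {t ∈ Icc (0:ℝ) 1 | γ t ∈ C ∧ DifferentiableAt ℝ γ t ∧ deriv γ t ≠ 0} ⊆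
      {t | DifferentiableAt ℝ f1 t ∧ deriv f1 t ≠ 0 ∧ f1 t ∈ Prod.fst '' C} ∪
      {t | DifferentiableAt ℝ f2 t ∧ deriv f2 t ≠ 0 ∧ f2 t ∈ Prod.snd '' C} := by
    rintro t ⟨_, htC, hd, hne⟩
    have hd1 : HasDerivAt f1 (deriv γ t).1 t := by
      have h := (hd.hasDerivAt.hasFDerivAt.fst).hasDerivAt
      simpa using h
    have hd2 : HasDerivAt f2 (deriv γ t).2 t := by
      have h := (hd.hasDerivAt.hasFDerivAt.snd).hasDerivAt
      simpa using h
    by_cases h : (deriv γ t).1 = 0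
    · have h2' : (deriv γ t).2 ≠ 0 := by
        intro hcon; exact hne (Prod.ext h hcon)
      right
      exact ⟨hd2.differentiableAt, by rw [hd2.deriv]; exact h2', mem_image_of_mem _ htC⟩
    · left
      exact ⟨hd1.differentiableAt, by rw [hd1.deriv]; exact h, mem_image_of_mem _ htC⟩
  refine measure_mono_null hsub ?_
  refine measure_union_null (key f1 _ h1) (key f2 _ h2)
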